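/- Let f∂ be a nonzero element of Witt(R) with W(f) = 1. Then every eigenvalue of ad(f∂) is an integer multiple of f'(0), and conversely for every integer N, N·f'(0) is an eigenvalue of ad(f∂) with one-dimensional eigenspace. -/

import Mathlib

open HahnSeries PowerSeries

namespace Stmt15Aux

set_option linter.unusedSectionVars false

variable {k : Type} [Field k] [CharZero k]

local notation "L" => LaurentSeries k
local notation "D" => LaurentSeries.derivative k
local notation "S" a => (HahnSeries.single (a : ℤ) (1 : k) : LaurentSeries k)
local notation "PS" F => (HahnSeries.ofPowerSeries ℤ k F : LaurentSeries k)

lemma D_coeff (g : L) (n : ℤ) : (D g).coeff n = (n + 1) • g.coeff (n + 1) := by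
  rw [LaurentSeries.derivative_apply, LaurentSeries.hasseDeriv_coeff]
  norm_num [Ring.choose_one_right]

lemma coe_coeff (F : k⟦X⟧) (n : ℤ) :
    (PS F).coeff n = if 0 ≤ n then PowerSeries.coeff n.toNat F else 0 := by
  split_ifs with h
  · conv_lhs => rw [← Int.toNat_of_nonneg h]
    exact ofPowerSeries_apply_coeff F n.toNat
  · rw [ofPowerSeries_apply, embDomain_notin_range (by
      rintro ⟨m, hm⟩
      have hm' : ((m:ℕ):ℤ) = n := hm
      omega)]

lemma shift_coeff (m : ℤ) (x : L) (n : ℤ) :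
    ((S m) * x).coeff n = x.coeff (n - m) := by
  have := HahnSeries.coeff_single_mul_add (r := (1:k)) (x := x) (a := n - m) (b := m)
  simpa using this

lemma cast_toNat {j : ℤ} (h : 0 ≤ j) : ((j.toNat : k)) = ((j : ℤ) : k) := by
  rw [← Int.cast_natCast, Int.toNat_of_nonneg h]

lemma coeff_dF (F : k⟦X⟧) (n : ℕ) :
    PowerSeries.coeff n F.derivativeFun = PowerSeries.coeff (n + 1) F * (n + 1) :=
  PowerSeries.coeff_derivative F n

lemma D_shift (m : ℤ) (F : k⟦X⟧) :
    D ((S m) * (PS F)) =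
      (S (m-1)) * (PS (PowerSeries.C (m : k) * F))
        + (S m) * (PS (PowerSeries.derivativeFun F)) := by
  ext n
  simp only [HahnSeries.coeff_add, D_coeff, shift_coeff, coe_coeff]
  have e1 : n - (m - 1) = n + 1 - m := by ring
  rw [e1]
  by_cases h2 : 0 ≤ n - m
  · have h1 : 0 ≤ n + 1 - m := by omega
    rw [if_pos h1, if_pos h1, if_pos h2, coeff_dF,
      PowerSeries.coeff_C_mul]
    have e2 : (n + 1 - m).toNat = (n - m).toNat + 1 := by omega
    rw [e2, zsmul_eq_mul, cast_toNat h2]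
    push_cast
    ring
  · by_cases h1 : 0 ≤ n + 1 - m
    · have hm : n + 1 = m := by omega
      rw [if_pos h1, if_pos h1, if_neg h2, add_zero, zsmul_eq_mul,
        PowerSeries.coeff_C_mul, hm]
    · rw [if_neg h1, if_neg h1, if_neg h2, smul_zero, add_zero]

lemma exists_rep (x : L) : ∃ (m : ℤ) (F : k⟦X⟧), x = (S m) * (PS F) := by
  by_cases hx : x = 0
  · exact ⟨0, 0, by simp [hx]⟩
  · exact ⟨x.order, x.powerSeriesPart, (LaurentSeries.single_order_mul_powerSeriesPart x).symm⟩

lemma key_prod (a b : ℤ) (P Q : k⟦X⟧) :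
    ((S a) * (PS P)) * ((S b) * (PS Q)) = (S (a+b)) * (PS (P * Q)) := by
  rw [mul_mul_mul_comm, HahnSeries.single_mul_single, one_mul, map_mul]

lemma D_mul (x y : L) : D (x * y) = x * D y + y * D x := by
  obtain ⟨m, F, rfl⟩ := exists_rep x
  obtain ⟨n, G, rfl⟩ := exists_rep y
  rw [key_prod, D_shift, D_shift, D_shift, PowerSeries.derivativeFun_mul]
  have e1 : ((S m) * (PS F)) * ((S (n-1)) * (PS (PowerSeries.C (n:k) * G))
        + (S n) * (PS G.derivativeFun))
      = (S (m+n-1)) * (PS (F * (PowerSeries.C (n:k) * G)))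
        + (S (m+n)) * (PS (F * G.derivativeFun)) := by
    rw [mul_add, key_prod, key_prod]
    have : m + (n-1) = m + n - 1 := by ring
    rw [this]
  have e2 : ((S n) * (PS G)) * ((S (m-1)) * (PS (PowerSeries.C (m:k) * F))
        + (S m) * (PS F.derivativeFun))
      = (S (m+n-1)) * (PS (G * (PowerSeries.C (m:k) * F)))
        + (S (m+n)) * (PS (G * F.derivativeFun)) := by
    rw [mul_add, key_prod, key_prod]
    have h1 : n + (m-1) = m + n - 1 := by ring
    have h2 : n + m = m + n := by ring
    rw [h1, h2]
  rw [e1, e2, smul_eq_mul, smul_eq_mul]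
  have hA : PowerSeries.C ((m+n : ℤ) : k) * (F * G)
      = F * (PowerSeries.C (n:k) * G) + G * (PowerSeries.C (m:k) * F) := by
    push_cast
    rw [map_add]
    ring
  have hB : F * G.derivativeFun + G * F.derivativeFun
      = F * G.derivativeFun + G * F.derivativeFun := rfl
  rw [hA, map_add, map_add, mul_add, mul_add]
  ring

lemma D_one : D (1 : L) = 0 := by
  have h := D_mul (1 : L) 1
  rw [mul_one, one_mul] at h
  -- h : D 1 = D 1 + D 1
  have := h.symm
  rwa [add_eq_left] at this

lemma D_inv (x : L) (hx : x ≠ 0) : D x⁻¹ = -(x⁻¹ * x⁻¹) * D x := by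
  have h1 : x * x⁻¹ = 1 := mul_inv_cancel₀ hx
  have h2 : x * D x⁻¹ + x⁻¹ * D x = 0 := by
    rw [← D_mul, h1, D_one]
  have h3 : x * D x⁻¹ = -(x⁻¹ * D x) := eq_neg_of_add_eq_zero_left h2
  calc D x⁻¹ = x⁻¹ * (x * D x⁻¹) := by rw [← mul_assoc, inv_mul_cancel₀ hx, one_mul]
    _ = x⁻¹ * -(x⁻¹ * D x) := by rw [h3]
    _ = -(x⁻¹ * x⁻¹) * D x := by ring

lemma D_pow (x : L) (n : ℕ) : D (x ^ (n+1)) = ((n+1 : ℤ) : L) * (x ^ n * D x) := by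
  induction n with
  | zero => simp
  | succ n ih =>
    have e : x ^ (n+2) = x ^ (n+1) * x := by ring
    rw [e, D_mul, ih]
    have e2 : x ^ (n+1) = x ^ n * x := by ring
    rw [e2]
    push_cast
    ring

lemma D_zpow (x : L) (hx : x ≠ 0) (N : ℤ) :
    D (x ^ N) = ((N : L)) * (x ^ (N-1) * D x) := by
  rcases N with n | n
  · simp only [Int.ofNat_eq_natCast]
    rw [zpow_natCast]
    rcases n with _ | n
    · simpa using D_one
    · rw [D_pow]
      have e : ((n+1 : ℕ) : ℤ) - 1 = ((n : ℕ) : ℤ) := by push_cast; ring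
      rw [e, zpow_natCast]
      push_cast
      ring
  · rw [zpow_negSucc, D_inv _ (pow_ne_zero _ hx), D_pow]
    have e1 : (Int.negSucc n) - 1 = -((n+2 : ℕ) : ℤ) := by
      rw [Int.negSucc_eq]; push_cast; ring
    rw [e1, zpow_neg, zpow_natCast]
    have ec : ((Int.negSucc n : ℤ) : L) = -(((n:ℕ) : L) + 1) := by
      rw [Int.negSucc_eq]; push_cast; ring
    rw [ec]
    have key : (x^(n+1))⁻¹ * (x^(n+1))⁻¹ * x^n = (x^(n+2))⁻¹ := by
      rw [← mul_inv]
      have e2 : x^(n+1) * x^(n+1) = x^(n+2) * x^n := by ring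
      rw [e2, mul_inv, mul_assoc, inv_mul_cancel₀ (pow_ne_zero n hx), mul_one]
    calc -((x^(n+1))⁻¹ * (x^(n+1))⁻¹) * (((n+1 : ℤ) : L) * (x ^ n * D x))
        = -(((n:ℕ) : L) + 1) * (((x^(n+1))⁻¹ * (x^(n+1))⁻¹ * x^n) * D x) := by
          push_cast; ring
      _ = -(((n:ℕ) : L) + 1) * ((x^(n+2))⁻¹ * D x) := by rw [key]

lemma eq_single_of_D_eq_zero (φ : L) (h : D φ = 0) :
    φ = HahnSeries.single (0:ℤ) (φ.coeff 0) := by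
  ext n
  by_cases hn : n = 0
  · subst hn; simp
  · rw [HahnSeries.coeff_single_of_ne hn]
    have := congrArg (fun z => HahnSeries.coeff z (n-1)) h
    simp only [D_coeff, HahnSeries.coeff_zero] at this
    rw [sub_add_cancel] at this
    rcases smul_eq_zero.mp this with h' | h'
    · exact absurd h' hn
    · exact h'

noncomputable def odeAux (s : PowerSeries k) : ℕ → k
  | 0 => 1
  | (n+1) => (∑ i ∈ Finset.range (n+1), (PowerSeries.coeff i s) * odeAux s (n-i)) / (n+1)
  decreasing_by omega

lemma ode (s : k⟦X⟧) :
    ∃ h : k⟦X⟧, PowerSeries.constantCoeff h = 1 ∧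
      PowerSeries.derivativeFun h = s * h := by
  refine ⟨PowerSeries.mk (odeAux s), ?_, ?_⟩
  · rw [← PowerSeries.coeff_zero_eq_constantCoeff_apply, PowerSeries.coeff_mk]
    simp [odeAux]
  · ext n
    rw [coeff_dF, PowerSeries.coeff_mk, PowerSeries.coeff_mul]
    rw [Finset.Nat.sum_antidiagonal_eq_sum_range_succ_mk]
    simp only [PowerSeries.coeff_mk]
    show odeAux s (n+1) * ((n:k)+1) = _
    conv_lhs => rw [odeAux]
    have hne : ((n:k)+1) ≠ 0 := by
      have : ((n+1 : ℕ) : k) ≠ 0 := Nat.cast_ne_zero.mpr (Nat.succ_ne_zero n)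
      push_cast at this
      exact this
    rw [div_mul_cancel₀ _ hne]

lemma coe_ne_zero {F : k⟦X⟧} (hF : F ≠ 0) : (PS F) ≠ 0 := by
  intro h
  apply hF
  apply ofPowerSeries_injective (Γ := ℤ)
  rw [h, map_zero]

lemma exists_u (q : k⟦X⟧) (hq0 : PowerSeries.constantCoeff q ≠ 0) :
    ∃ u : L, u ≠ 0 ∧
      ((S (1:ℤ)) * (PS q)) * D u = (PowerSeries.constantCoeff q) • u := by
  set c := PowerSeries.constantCoeff q with hc
  obtain ⟨r, hr⟩ : (PowerSeries.X : k⟦X⟧) ∣ (PowerSeries.C c - q) := by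
    rw [PowerSeries.X_dvd_iff, map_sub, PowerSeries.constantCoeff_C, sub_eq_zero]
  obtain ⟨h, h0, hdh⟩ := ode (r * q⁻¹)
  have hq : h ≠ 0 := by
    intro hz
    rw [hz, map_zero] at h0
    exact one_ne_zero h0.symm
  refine ⟨(S (1:ℤ)) * (PS h), mul_ne_zero (single_ne_zero one_ne_zero) (coe_ne_zero hq), ?_⟩
  have hqdh : q * h.derivativeFun = r * h := by
    rw [hdh, ← mul_assoc, ← mul_assoc, mul_comm q r, mul_assoc r,
      PowerSeries.mul_inv_cancel q hq0, mul_one]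
  rw [D_shift]
  have c1 : PowerSeries.C (((1:ℤ)):k) = 1 := by norm_num
  rw [c1, one_mul, mul_add, key_prod, key_prod, hqdh]
  rw [show (1:ℤ) + (1-1) = 1 by norm_num, show (1:ℤ) + 1 = 2 by norm_num]
  have e2 : (S (2:ℤ)) = (S (1:ℤ)) * (S (1:ℤ)) := by
    rw [HahnSeries.single_mul_single, one_mul]
    norm_num
  have eX : (PS ((PowerSeries.C c - q) * h)) = (S (1:ℤ)) * (PS (r * h)) := by
    rw [hr, mul_assoc, map_mul, HahnSeries.ofPowerSeries_X]
  rw [e2, mul_assoc, ← eX, sub_mul, map_sub, mul_sub]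
  have eCh : (PS (PowerSeries.C c * h)) = c • (PS h) := by
    rw [map_mul, ofPowerSeries_C, HahnSeries.C_apply, HahnSeries.single_zero_mul_eq_smul]
  have comm : (S (1:ℤ)) * (c • (PS h)) = c • ((S (1:ℤ)) * (PS h)) := by
    rw [← HahnSeries.single_zero_mul_eq_smul, ← HahnSeries.single_zero_mul_eq_smul]
    ring
  rw [eCh, comm]
  abel

lemma smul_mul (c : k) (x y : L) : x * (c • y) = c • (x * y) := by
  rw [← HahnSeries.single_zero_mul_eq_smul, ← HahnSeries.single_zero_mul_eq_smul]
  ring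

lemma C_one_int : PowerSeries.C (((1:ℤ)):k) = 1 := by norm_num

lemma main (f : LaurentSeries k) (hf : f ≠ 0) (horder : f.order = 1) :
    (∀ a : k, (∃ g : LaurentSeries k, g ≠ 0 ∧
        f * LaurentSeries.derivative k g - g * LaurentSeries.derivative k f = a • g) →
      ∃ N : ℤ, a = N • f.coeff 1) ∧
    (∀ N : ℤ, ∃ g : LaurentSeries k, g ≠ 0 ∧
      f * LaurentSeries.derivative k g - g * LaurentSeries.derivative k f
        = (N • f.coeff 1) • g) ∧
    (∀ a : k, ∀ g h : LaurentSeries k, g ≠ 0 →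
      f * LaurentSeries.derivative k g - g * LaurentSeries.derivative k f = a • g →
      f * LaurentSeries.derivative k h - h * LaurentSeries.derivative k f = a • h →
      ∃ c : k, h = c • g) := by
  set c : k := f.coeff 1 with hcdef
  have hc : c ≠ 0 := by
    have : f.coeff f.order ≠ 0 := (by rw [← HahnSeries.leadingCoeff_eq]; exact HahnSeries.leadingCoeff_ne_zero.mpr hf)
    rwa [horder] at this
  set q : k⟦X⟧ := f.powerSeriesPart with hqdef
  have hfq : f = (S (1:ℤ)) * (PS q) := by
    conv_lhs => rw [← LaurentSeries.single_order_mul_powerSeriesPart f]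
    rw [horder]
  have hq0 : PowerSeries.constantCoeff q = c := by
    rw [← PowerSeries.coeff_zero_eq_constantCoeff_apply, hqdef,
      LaurentSeries.powerSeriesPart_coeff, horder]
    try norm_num
    rfl
  have hDf : LaurentSeries.derivative k f
      = (S (0:ℤ)) * (PS q) + (S (1:ℤ)) * (PS q.derivativeFun) := by
    conv_lhs => rw [hfq]
    rw [D_shift, C_one_int, one_mul]
    norm_num
  refine ⟨?_, ?_, ?_⟩
  · -- part 1
    rintro a ⟨g, hg, heq⟩
    set n : ℤ := g.order with hndef
    set G : k⟦X⟧ := g.powerSeriesPart with hGdef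
    have hgG : g = (S n) * (PS G) := by
      conv_lhs => rw [← LaurentSeries.single_order_mul_powerSeriesPart g]
    have hb : PowerSeries.coeff 0 G = g.coeff n := by
      rw [hGdef, LaurentSeries.powerSeriesPart_coeff]
      try norm_num
      rfl
    have hbne : g.coeff n ≠ 0 := (by rw [← HahnSeries.leadingCoeff_eq]; exact HahnSeries.leadingCoeff_ne_zero.mpr hg)
    refine ⟨n - 1, ?_⟩
    have h1 : f * LaurentSeries.derivative k g - g * LaurentSeries.derivative k f
        = ((S n) * (PS (q * (PowerSeries.C ((n:ℤ):k) * G)))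
            + (S (n+1)) * (PS (q * G.derivativeFun)))
          - ((S n) * (PS (G * q)) + (S (n+1)) * (PS (G * q.derivativeFun))) := by
      conv_lhs => rw [hgG, D_shift, hDf, hfq]
      rw [mul_add, mul_add, key_prod, key_prod, key_prod, key_prod]
      rw [show (1:ℤ) + (n-1) = n by ring, show (1:ℤ) + n = n + 1 by ring,
        show n + (0:ℤ) = n by ring]
    have h2 := congrArg (fun z : L => z.coeff n) (h1.symm.trans heq)
    simp only [HahnSeries.coeff_sub, HahnSeries.coeff_add, HahnSeries.coeff_smul,
      shift_coeff, coe_coeff] at h2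
    rw [sub_self, if_pos le_rfl, show n - (n+1) = -1 by ring] at h2
    norm_num at h2
    have hb' : PowerSeries.constantCoeff G = g.coeff n := by
      rw [← PowerSeries.coeff_zero_eq_constantCoeff_apply]; exact hb
    rw [hq0, hb'] at h2
    apply mul_right_cancel₀ hbne
    rw [zsmul_eq_mul]
    push_cast
    linear_combination -h2
  · -- part 2
    intro N
    obtain ⟨u, hu, hfu⟩ := exists_u q (by rw [hq0]; exact hc)
    rw [← hfq, hq0] at hfu
    refine ⟨f * u ^ N, mul_ne_zero hf (zpow_ne_zero N hu), ?_⟩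
    rw [D_mul, D_zpow u hu N]
    have huN : u ^ (N-1) * u = u ^ N := by
      rw [← zpow_add_one₀ hu, sub_add_cancel]
    calc f * (f * (((N:ℤ) : L) * (u ^ (N-1) * LaurentSeries.derivative k u))
            + u ^ N * LaurentSeries.derivative k f)
          - f * u ^ N * LaurentSeries.derivative k f
        = ((N:ℤ) : L) * (f * (u ^ (N-1) * (f * LaurentSeries.derivative k u))) := by ring
      _ = ((N:ℤ) : L) * (f * (u ^ (N-1) * (c • u))) := by rw [hfu]
      _ = ((N:ℤ) : L) * (c • (f * (u ^ (N-1) * u))) := by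
          rw [smul_mul, smul_mul]
      _ = (N • c) • (f * u ^ N) := by
          rw [huN, ← HahnSeries.single_zero_mul_eq_smul,
            ← map_intCast (HahnSeries.C (R := k) (Γ := ℤ)) N, HahnSeries.C_apply,
            ← mul_assoc, HahnSeries.single_mul_single, zero_add, zsmul_eq_mul,
            ← HahnSeries.single_zero_mul_eq_smul]
  · -- part 3
    intro a g h hg heq1 heq2
    have e1 : h * (f * LaurentSeries.derivative k g) - h * (g * LaurentSeries.derivative k f)
        = a • (h * g) := by
      rw [← mul_sub, heq1, smul_mul]
    have e2 : g * (f * LaurentSeries.derivative k h) - g * (h * LaurentSeries.derivative k f)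
        = a • (g * h) := by
      rw [← mul_sub, heq2, smul_mul]
    have e3 : a • (h * g) = a • (g * h) := by rw [mul_comm]
    have e4 : f * (h * LaurentSeries.derivative k g - g * LaurentSeries.derivative k h) = 0 := by
      have e5 := e1.trans (e3.trans e2.symm)
      linear_combination e5
    have hD : h * LaurentSeries.derivative k g = g * LaurentSeries.derivative k h := by
      rcases mul_eq_zero.mp e4 with h' | h'
      · exact absurd h' hf
      · exact sub_eq_zero.mp h'
    set φ : L := h * g⁻¹ with hφdef
    have hh : h = φ * g := by
      rw [hφdef, mul_assoc, inv_mul_cancel₀ hg, mul_one]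
    have hDφ : LaurentSeries.derivative k φ = 0 := by
      have h1 : h * LaurentSeries.derivative k g
          = g * (φ * LaurentSeries.derivative k g + g * LaurentSeries.derivative k φ) := by
        rw [← D_mul, ← hh, hD]
      rw [hh] at h1
      have h2 : g * (g * LaurentSeries.derivative k φ) = 0 := by linear_combination -h1
      rcases mul_eq_zero.mp h2 with h' | h'
      · exact absurd h' hg
      · rcases mul_eq_zero.mp h' with h'' | h''
        · exact absurd h'' hg
        · exact h''
    refine ⟨φ.coeff 0, ?_⟩
    conv_lhs => rw [hh, eq_single_of_D_eq_zero φ hDφ]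
    rw [HahnSeries.single_zero_mul_eq_smul]

end Stmt15Aux

/-- If `f∂ ∈ Witt(R)` is nonzero with `W(f) = 1`, then every eigenvalue of
`ad(f∂)` is an integer multiple of `f'(0)` (the coefficient of `x` in `f`);
conversely every `N·f'(0)` is an eigenvalue, and each eigenspace is
one-dimensional. -/
theorem stmt15 {k : Type} [Field k] [CharZero k]
    (f : LaurentSeries k) (hf : f ≠ 0) (horder : f.order = 1) :
    (∀ a : k, (∃ g : LaurentSeries k, g ≠ 0 ∧
        f * LaurentSeries.derivative k g - g * LaurentSeries.derivative k f = a • g) →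
      ∃ N : ℤ, a = N • f.coeff 1) ∧
    (∀ N : ℤ, ∃ g : LaurentSeries k, g ≠ 0 ∧
      f * LaurentSeries.derivative k g - g * LaurentSeries.derivative k f
        = (N • f.coeff 1) • g) ∧
    (∀ a : k, ∀ g h : LaurentSeries k, g ≠ 0 →
      f * LaurentSeries.derivative k g - g * LaurentSeries.derivative k f = a • g →
      f * LaurentSeries.derivative k h - h * LaurentSeries.derivative k f = a • h →
      ∃ c : k, h = c • g) :=
  Stmt15Aux.main f hf horder
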